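/- Let S be an admissible additive subsemigroup of ℤ^n × ℤ. If K is a compact subset of the interior of Δ(S), then there exists k₀ ≥ 1 such that K ⊆ Conv(S^{k!}) for every integer k ≥ k₀. -/

import Mathlib

open Set

noncomputable section

/-- The embedding of the lattice `ℤ^n × ℤ` into `ℝ^n × ℝ`. -/
def latticeEmbed {n : ℕ} (x : (Fin n → ℤ) × ℤ) : (Fin n → ℝ) × ℝ :=
  (fun i => (x.1 i : ℝ), (x.2 : ℝ))

/-- The set of all finite nonnegative linear combinations of elements of `T`. -/
def coneCombos {E : Type*} [AddCommMonoid E] [Module ℝ E] (T : Set E) : Set E :=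
  {x | ∃ (k : ℕ) (c : Fin k → ℝ) (t : Fin k → E),
    (∀ i, 0 ≤ c i) ∧ (∀ i, t i ∈ T) ∧ x = ∑ i, c i • t i}

/-- `C(T)`: the closed convex cone generated by `T`. -/
def closedConeHull {E : Type*} [AddCommMonoid E] [Module ℝ E] [TopologicalSpace E]
    (T : Set E) : Set E :=
  closure (coneCombos T)

/-- The closed convex cone `C(S) ⊆ ℝ^{n+1}` generated by a subset `S ⊆ ℤ^n × ℤ`. -/
def coneOf {n : ℕ} (S : Set ((Fin n → ℤ) × ℤ)) : Set ((Fin n → ℝ) × ℝ) :=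
  closedConeHull (latticeEmbed '' S)

/-- The Okounkov convex set `Δ(S) = π(C(S) ∩ (ℝ^n × {1}))`. -/
def okounkovSet {n : ℕ} (S : Set ((Fin n → ℤ) × ℤ)) : Set (Fin n → ℝ) :=
  Prod.fst '' (coneOf S ∩ {x | x.2 = 1})

/-- `S^k = {α ∈ ℝ^n : kα ∈ ℤ^n and (kα, k) ∈ S}`. -/
def Spow {n : ℕ} (S : Set ((Fin n → ℤ) × ℤ)) (k : ℕ) : Set (Fin n → ℝ) :=
  {α | ∃ β : Fin n → ℤ, (∀ i, (β i : ℝ) = (k : ℝ) * α i) ∧ (β, (k : ℤ)) ∈ S}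


/-- `Conv(S^k)`: the closed convex hull of `S^k` in `ℝ^n`. -/
def convSpow {n : ℕ} (S : Set ((Fin n → ℤ) × ℤ)) (k : ℕ) : Set (Fin n → ℝ) :=
  closure (convexHull ℝ (Spow S k))

/-! ### Auxiliary material -/

namespace OkounkovAux

open Filter Topology

/-- Cast an integer vector to a real vector. -/
def cR {n : ℕ} (β : Fin n → ℤ) : Fin n → ℝ := fun i => (β i : ℝ)

@[simp] lemma cR_apply {n : ℕ} (β : Fin n → ℤ) (i : Fin n) : cR β i = (β i : ℝ) := rfl

lemma coneCombos_smul {E : Type*} [AddCommMonoid E] [Module ℝ E] (T : Set E)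
    {r : ℝ} (hr : 0 ≤ r) {x : E} (hx : x ∈ coneCombos T) : r • x ∈ coneCombos T := by
  obtain ⟨k, c, t, hc, ht, rfl⟩ := hx
  exact ⟨k, fun i => r * c i, t, fun i => mul_nonneg hr (hc i), ht, by
    simp [Finset.smul_sum, mul_smul]⟩

lemma coneCombos_add {E : Type*} [AddCommMonoid E] [Module ℝ E] (T : Set E)
    {x y : E} (hx : x ∈ coneCombos T) (hy : y ∈ coneCombos T) : x + y ∈ coneCombos T := by
  obtain ⟨k1, c1, t1, hc1, ht1, rfl⟩ := hx
  obtain ⟨k2, c2, t2, hc2, ht2, rfl⟩ := hy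
  refine ⟨k1 + k2, Fin.append c1 c2, Fin.append t1 t2, ?_, ?_, ?_⟩
  · exact Fin.addCases (by simp [hc1]) (by simp [hc2])
  · exact Fin.addCases (by simp [ht1]) (by simp [ht2])
  · rw [Fin.sum_univ_add]
    simp

lemma coneCombos_convex {E : Type*} [AddCommMonoid E] [Module ℝ E] (T : Set E) :
    Convex ℝ (coneCombos T) := fun _ hx _ hy a b ha hb _ =>
  coneCombos_add T (coneCombos_smul T ha hx) (coneCombos_smul T hb hy)

lemma interior_closure_subset_of_convex {E : Type*} [NormedAddCommGroup E] [NormedSpace ℝ E]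
    [FiniteDimensional ℝ E] {s : Set E} (hs : Convex ℝ s) : interior (closure s) ⊆ s := by
  intro z hz
  have hcs : Convex ℝ (closure s) := hs.closure
  have htop : affineSpan ℝ (closure s) = ⊤ :=
    hcs.interior_nonempty_iff_affineSpan_eq_top.mp ⟨z, hz⟩
  have h1 : affineSpan ℝ s = ⊤ := by
    refine top_le_iff.mp ?_
    rw [← htop]
    exact affineSpan_le.mpr
      (closure_minimal (subset_affineSpan ℝ s) (affineSpan ℝ s).closed_of_finiteDimensional)
  obtain ⟨w, hw⟩ := hs.interior_nonempty_iff_affineSpan_eq_top.mpr h1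
  by_cases hzw : z = w
  · exact hzw ▸ interior_subset hw
  obtain ⟨ε, hε, hball⟩ := Metric.isOpen_iff.mp isOpen_interior z hz
  set t : ℝ := ε / (2 * ‖z - w‖) with ht
  have hzwn : 0 < ‖z - w‖ := by
    simpa [sub_eq_zero] using hzw
  have ht0 : 0 < t := by positivity
  have hz' : z + t • (z - w) ∈ closure s := by
    apply interior_subset
    apply hball
    rw [Metric.mem_ball, dist_eq_norm]
    have : z + t • (z - w) - z = t • (z - w) := by abel
    rw [this, norm_smul, Real.norm_eq_abs, abs_of_pos ht0, ht]
    rw [div_mul_eq_mul_div, mul_comm]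
    rw [div_lt_iff₀ (by positivity)]
    nlinarith
  set a : ℝ := t / (1 + t) with ha
  set b : ℝ := 1 / (1 + t) with hb
  have h1t : (0:ℝ) < 1 + t := by linarith
  have hab : a + b = 1 := by
    rw [ha, hb]; field_simp; ring
  have hcombo : a • w + b • (z + t • (z - w)) = z := by
    rw [ha, hb]
    match_scalars <;> (field_simp; try ring)
  have := hs.combo_interior_closure_mem_interior hw hz' (by positivity) (by positivity) hab
  rw [hcombo] at this
  exact interior_subset this

lemma coneOf_smul {n : ℕ} (S : Set ((Fin n → ℤ) × ℤ)) {r : ℝ} (hr : 0 ≤ r)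
    {x : (Fin n → ℝ) × ℝ} (hx : x ∈ coneOf S) : r • x ∈ coneOf S :=
  map_mem_closure (continuous_const_smul r) hx fun _ hy => coneCombos_smul _ hr hy

lemma mem_okounkov_iff {n : ℕ} (S : Set ((Fin n → ℤ) × ℤ)) (y : Fin n → ℝ) :
    y ∈ okounkovSet S ↔ ((y, (1:ℝ)) ∈ coneOf S) := by
  constructor
  · rintro ⟨⟨z, u⟩, ⟨hc, hu⟩, rfl⟩
    simp only [mem_setOf_eq] at hu
    subst hu; exact hc
  · intro h; exact ⟨(y, 1), ⟨h, rfl⟩, rfl⟩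

lemma mem_interior_coneOf {n : ℕ} {S : Set ((Fin n → ℤ) × ℤ)} {x : Fin n → ℝ}
    (hx : x ∈ interior (okounkovSet S)) :
    ((x, (1:ℝ)) : (Fin n → ℝ) × ℝ) ∈ interior (coneOf S) := by
  rw [mem_interior_iff_mem_nhds]
  have hcont : ContinuousAt (fun p : (Fin n → ℝ) × ℝ => p.2⁻¹ • p.1)
      ((x, (1:ℝ)) : (Fin n → ℝ) × ℝ) :=
    (continuousAt_snd.inv₀ (by norm_num)).smul continuousAt_fst
  have hU : interior (okounkovSet S) ∈ 𝓝 ((1:ℝ)⁻¹ • x) := by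
    rw [inv_one, one_smul]
    exact isOpen_interior.mem_nhds hx
  have h1 := hcont.eventually_mem hU
  have h2 : ∀ᶠ p : (Fin n → ℝ) × ℝ in 𝓝 (x, (1:ℝ)), 0 < p.2 := by
    have : IsOpen {p : (Fin n → ℝ) × ℝ | 0 < p.2} := isOpen_lt continuous_const continuous_snd
    exact this.eventually_mem (by norm_num)
  filter_upwards [h1, h2] with p hp1 hp2
  have hmem : ((p.2⁻¹ • p.1, (1:ℝ)) : (Fin n → ℝ) × ℝ) ∈ coneOf S :=
    (mem_okounkov_iff S _).mp (interior_subset hp1)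
  have : p = p.2 • ((p.2⁻¹ • p.1, (1:ℝ)) : (Fin n → ℝ) × ℝ) := by
    ext
    · simp [smul_smul, mul_inv_cancel₀ hp2.ne']
    · simp
  rw [this]
  exact coneOf_smul S hp2.le hmem

variable {n : ℕ} {S : Set ((Fin n → ℤ) × ℤ)}
variable (hsemi : ∀ a ∈ S, ∀ b ∈ S, a + b ∈ S)

section
include hsemi

lemma nsmulS_mem {a : (Fin n → ℤ) × ℤ} (ha : a ∈ S) : ∀ j : ℕ, 1 ≤ j → j • a ∈ S := by
  intro j hj
  induction j with
  | zero => omega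
  | succ j ih =>
    rcases Nat.eq_or_lt_of_le hj with h | h
    · simpa [← h] using ha
    · have := hsemi _ (ih (by omega)) _ ha
      rw [succ_nsmul]
      exact this

lemma add_nsmul_mem {a b : (Fin n → ℤ) × ℤ} (ha : a ∈ S) (hb : b ∈ S) (j : ℕ) :
    a + j • b ∈ S := by
  induction j with
  | zero => simpa using ha
  | succ j ih =>
    have := hsemi _ ih _ hb
    rw [succ_nsmul, ← add_assoc]
    exact this

/-- Absorption of one horizontal element into the convex hull. -/
lemma absorb_one {N : ℕ} (hN : 1 ≤ N) {β : Fin n → ℤ} (hβ : (β, (0:ℤ)) ∈ S)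
    {c : ℝ} (hc : 0 ≤ c) {p : Fin n → ℝ} (hp : p ∈ convexHull ℝ (Spow S N)) :
    p + c • cR β ∈ convexHull ℝ (Spow S N) := by
  have hNR : (0:ℝ) < (N:ℝ) := by exact_mod_cast hN
  have hA : Convex ℝ ((fun q => q + c • cR β) ⁻¹' (convexHull ℝ (Spow S N))) :=
    (convex_convexHull ℝ (Spow S N)).translate_preimage_left (c • cR β)
  have hsub : Spow S N ⊆ (fun q => q + c • cR β) ⁻¹' (convexHull ℝ (Spow S N)) := by
    intro p' hp'
    obtain ⟨γ, hγR, hγS⟩ := hp'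
    obtain ⟨j, hj⟩ := exists_nat_ge (c * N)
    have hq : p' + ((j:ℝ)/N) • cR β ∈ Spow S N := by
      refine ⟨fun l => γ l + (j:ℤ) * β l, fun l => ?_, ?_⟩
      · simp only [cR_apply]
        push_cast
        rw [hγR l]
        simp only [Pi.add_apply, Pi.smul_apply, smul_eq_mul, cR_apply]
        field_simp
      · have := add_nsmul_mem hsemi hγS hβ j
        simp [Prod.ext_iff] at this
        exact this
    rcases eq_or_lt_of_le hc with h | h
    · simp only [mem_preimage, ← h, zero_smul, add_zero]
      exact subset_convexHull ℝ _ ⟨γ, hγR, hγS⟩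
    · have hj0 : (0:ℝ) < j := lt_of_lt_of_le (by positivity) hj
      set θ : ℝ := c * N / j with hθdef
      have hθ0 : 0 < θ := by positivity
      have hθ1 : θ ≤ 1 := by
        rw [hθdef, div_le_one hj0]; linarith
      have key : (1 - θ) • p' + θ • (p' + ((j:ℝ)/N) • cR β) = p' + c • cR β := by
        rw [hθdef]
        match_scalars <;> (field_simp; try ring)
      simp only [mem_preimage]
      rw [← key]
      exact (convex_convexHull ℝ (Spow S N))
        (subset_convexHull ℝ _ ⟨γ, hγR, hγS⟩)
        (subset_convexHull ℝ _ hq) (by linarith) hθ0.le (by ring)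
  exact convexHull_min hsub hA hp

lemma absorb_sum {N : ℕ} (hN : 1 ≤ N) {ι : Type*} (F : Finset ι) (c : ι → ℝ)
    (β : ι → Fin n → ℤ) (hc : ∀ i ∈ F, 0 ≤ c i) (hβ : ∀ i ∈ F, (β i, (0:ℤ)) ∈ S) :
    ∀ p ∈ convexHull ℝ (Spow S N), p + ∑ i ∈ F, c i • cR (β i) ∈ convexHull ℝ (Spow S N) := by
  classical
  induction F using Finset.induction_on with
  | empty => intro p hp; simpa using hp
  | insert _ _ hnotmem ih =>
    rename_i a F'
    intro p hp
    rw [Finset.sum_insert hnotmem, add_comm (c a • cR (β a)), ← add_assoc]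
    exact absorb_one hsemi hN (hβ a (Finset.mem_insert_self a F'))
      (hc a (Finset.mem_insert_self a F'))
      (ih (fun i hi => hc i (Finset.mem_insert_of_mem hi))
        (fun i hi => hβ i (Finset.mem_insert_of_mem hi)) p hp)

/-- The key pointwise statement: a height-one point of the cone of combinations lies in
`convexHull (Spow S k!)` for all large `k`. -/
lemma pointwise_mem (hadm : ∀ a ∈ S, 0 ≤ a.2) {y : Fin n → ℝ}
    (hy : ((y, (1:ℝ)) : (Fin n → ℝ) × ℝ) ∈ coneCombos (latticeEmbed '' S)) :
    ∃ M : ℕ, 1 ≤ M ∧ ∀ k, M ≤ k → y ∈ convexHull ℝ (Spow S (Nat.factorial k)) := by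
  classical
  obtain ⟨r, c, t, hc, ht, heq⟩ := hy
  choose s hsS hst using ht
  set m : Fin r → ℕ := fun i => (s i).2.toNat with hm
  have hmz : ∀ i, ((m i : ℤ)) = (s i).2 := fun i => Int.toNat_of_nonneg (hadm _ (hsS i))
  have htfst : ∀ i, (t i).1 = cR ((s i).1) := fun i => by rw [← hst i]; rfl
  have htsnd : ∀ i, (t i).2 = (m i : ℝ) := fun i => by
    rw [← hst i]
    show ((s i).2 : ℝ) = (m i : ℝ)
    exact_mod_cast congrArg (fun z : ℤ => (z : ℝ)) (hmz i).symm
  have heq1 : y = ∑ i, c i • cR ((s i).1) := by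
    have h := congrArg Prod.fst heq
    rw [Prod.fst_sum] at h
    simpa [htfst] using h
  have heq2 : (1:ℝ) = ∑ i, c i * (m i : ℝ) := by
    have h := congrArg Prod.snd heq
    rw [Prod.snd_sum] at h
    simpa [htsnd, smul_eq_mul] using h
  refine ⟨1 + Finset.univ.sup m, Nat.le_add_right 1 _, fun k hk => ?_⟩
  set N := Nat.factorial k with hNdef
  have hN1 : 1 ≤ N := Nat.one_le_iff_ne_zero.mpr (Nat.factorial_ne_zero k)
  set Fp : Finset (Fin r) := Finset.univ.filter (fun i => 0 < m i) with hFp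
  set F0 : Finset (Fin r) := Finset.univ.filter (fun i => ¬ 0 < m i) with hF0
  set a : Fin r → (Fin n → ℝ) := fun i => fun j => ((s i).1 j : ℝ) / (m i) with haDef
  have ha : ∀ i ∈ Fp, a i ∈ Spow S N := by
    intro i hi
    have hmi : 0 < m i := (Finset.mem_filter.mp hi).2
    have hmile : m i ≤ k := by
      have h1 : m i ≤ Finset.univ.sup m := Finset.le_sup (Finset.mem_univ i)
      omega
    have hdvd : m i ∣ N := Nat.dvd_factorial hmi hmile
    set j := N / m i with hj
    have hjm : j * m i = N := Nat.div_mul_cancel hdvd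
    have hj1 : 1 ≤ j := (Nat.one_le_div_iff hmi).mpr (Nat.le_of_dvd (by omega) hdvd)
    have hu : j • s i ∈ S := nsmulS_mem hsemi (hsS i) j hj1
    have hmiR : ((m i : ℝ)) ≠ 0 := by exact_mod_cast hmi.ne'
    refine ⟨(j • s i).1, fun l => ?_, ?_⟩
    · have h1 : (j • s i).1 l = (j : ℤ) * (s i).1 l := by
        simp [nsmul_eq_mul]
      rw [h1]
      push_cast
      have hNr : ((N:ℝ)) = (j:ℝ) * (m i : ℝ) := by exact_mod_cast hjm.symm
      rw [hNr, mul_assoc]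
      congr 1
      rw [mul_comm, div_mul_cancel₀ _ hmiR]
    · have h2 : (j • s i).2 = (N:ℤ) := by
        have h3 : (j • s i).2 = (j:ℤ) * (s i).2 := by simp [nsmul_eq_mul]
        rw [h3, ← hmz i]
        exact_mod_cast hjm
      rw [← h2]
      exact hu
  set w : Fin r → ℝ := fun i => c i * (m i : ℝ) with hw
  have hsumw : ∑ i ∈ Fp, w i = 1 := by
    rw [heq2]
    refine Finset.sum_subset (Finset.subset_univ Fp) ?_
    intro i _ hi
    have : ¬ 0 < m i := by
      intro h
      exact hi (Finset.mem_filter.mpr ⟨Finset.mem_univ i, h⟩)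
    have hmi0 : m i = 0 := by omega
    simp [hw, hmi0]
  have hP : (∑ i ∈ Fp, w i • a i) ∈ convexHull ℝ (Spow S N) := by
    refine (convex_convexHull ℝ (Spow S N)).sum_mem
      (fun i _ => mul_nonneg (hc i) (by positivity)) hsumw
      (fun i hi => subset_convexHull ℝ _ (ha i hi))
  have hsplit : y = (∑ i ∈ Fp, w i • a i) + ∑ i ∈ F0, c i • cR ((s i).1) := by
    rw [heq1, ← Finset.sum_filter_add_sum_filter_not Finset.univ (fun i => 0 < m i)
      (fun i => c i • cR ((s i).1))]
    congr 1
    refine Finset.sum_congr rfl ?_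
    intro i hi
    have hmi : 0 < m i := (Finset.mem_filter.mp hi).2
    have hmiR : ((m i : ℝ)) ≠ 0 := by exact_mod_cast hmi.ne'
    funext l
    simp only [hw, haDef, Pi.smul_apply, smul_eq_mul, cR_apply]
    field_simp
  rw [hsplit]
  refine absorb_sum hsemi hN1 F0 c (fun i => (s i).1) (fun i _ => hc i) ?_ _ hP
  intro i hi
  have hmi : ¬ 0 < m i := (Finset.mem_filter.mp hi).2
  have hmi0 : m i = 0 := by omega
  have hs2 : (s i).2 = 0 := by rw [← hmz i, hmi0]; rfl
  have : s i = ((s i).1, (0:ℤ)) := by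
    rw [← hs2]
  rw [← this]
  exact hsS i

end

/-- Cross-polytope lemma: a convex set containing `x` and `x ± r eᵢ` contains every point
`y` with `|yᵢ - xᵢ| ≤ r / n` for all `i`. -/
lemma crossPolytope_subset (hn : 1 ≤ n) {D : Set (Fin n → ℝ)} (hD : Convex ℝ D)
    {x : Fin n → ℝ} {r : ℝ} (hr : 0 < r) (hx : x ∈ D)
    (hpts : ∀ i : Fin n, ∀ e : ℝ, (e = r ∨ e = -r) → x + e • (Pi.single i 1 : Fin n → ℝ) ∈ D)
    {y : Fin n → ℝ} (hy : ∀ i, |y i - x i| ≤ r / n) : y ∈ D := by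
  classical
  set d : Fin n → ℝ := fun i => y i - x i with hd
  set tt : Fin n → ℝ := fun i => |d i| / r with htt
  have htt0 : ∀ i, 0 ≤ tt i := fun i => by positivity
  have hsum : ∑ i, tt i ≤ 1 := by
    have h1 : ∑ i, |d i| ≤ ∑ _i : Fin n, r / n :=
      Finset.sum_le_sum (fun i _ => hy i)
    have h2 : ∑ _i : Fin n, r / n = r := by
      rw [Finset.sum_const, Finset.card_univ, Fintype.card_fin, nsmul_eq_mul]
      field_simp
    have h3 : ∑ i, tt i = (∑ i, |d i|) / r := by
      rw [Finset.sum_div]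
    rw [h3, div_le_one hr]
    rw [h2] at h1
    exact h1
  set q : Fin n → (Fin n → ℝ) := fun i =>
    x + (if 0 ≤ d i then r else -r) • (Pi.single i 1 : Fin n → ℝ) with hq
  have hqD : ∀ i, q i ∈ D := by
    intro i
    refine hpts i _ ?_
    by_cases h : 0 ≤ d i <;> simp [h]
  -- y as a convex combination indexed by `Option (Fin n)`
  set z : Option (Fin n) → (Fin n → ℝ) := fun o => o.elim x q with hz
  set wgt : Option (Fin n) → ℝ := fun o => o.elim (1 - ∑ i, tt i) tt with hwgt
  have hcomb : ∑ o : Option (Fin n), wgt o • z o ∈ D := by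
    refine hD.sum_mem ?_ ?_ ?_
    · intro o _
      cases o with
      | none => simpa [hwgt] using sub_nonneg.mpr hsum
      | some i => simpa [hwgt] using htt0 i
    · rw [Fintype.sum_option]
      simp [hwgt]
    · intro o _
      cases o with
      | none => exact hx
      | some i => exact hqD i
  have hyeq : y = ∑ o : Option (Fin n), wgt o • z o := by
    rw [Fintype.sum_option]
    simp only [hwgt, hz, Option.elim]
    have hqexp : ∀ i, tt i • q i = tt i • x + d i • (Pi.single i (1:ℝ) : Fin n → ℝ) := by
      intro i
      rw [hq]
      simp only [smul_add, smul_smul]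
      congr 1
      by_cases h : 0 ≤ d i
      · simp only [if_pos h, htt]
        congr 1
        rw [abs_of_nonneg h]
        field_simp
      · simp only [if_neg h, htt]
        congr 1
        rw [abs_of_neg (not_le.mp h)]
        field_simp
    rw [Finset.sum_congr rfl (fun i _ => hqexp i)]
    rw [Finset.sum_add_distrib]
    have hsingle : ∑ i, d i • (Pi.single i (1:ℝ) : Fin n → ℝ) = fun j => d j := by
      have h5 : ∀ i, d i • (Pi.single i (1:ℝ) : Fin n → ℝ) = (Pi.single i (d i) : Fin n → ℝ) := by
        intro i
        funext j
        simp [Pi.single_apply, mul_ite]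
      rw [Finset.sum_congr rfl (fun i _ => h5 i)]
      exact Finset.univ_sum_single (fun j => d j)
    rw [hsingle, ← Finset.sum_smul]
    funext j
    simp only [Pi.add_apply, Pi.smul_apply, smul_eq_mul, hd]
    ring
  rw [hyeq]
  exact hcomb

end OkounkovAux

open OkounkovAux Filter Topology

/-- For an admissible additive subsemigroup `S ⊆ ℤ^n × ℤ` and a compact
subset `K` of the interior of `Δ(S)`, there exists `k₀ ≥ 1` such that `K ⊆ Conv(S^{k!})`
for every `k ≥ k₀`. -/
theorem compact_subset_convexHull_Spow_factorial (n : ℕ) (hn : 1 ≤ n)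
    (S : Set ((Fin n → ℤ) × ℤ))
    (hsemi : ∀ a ∈ S, ∀ b ∈ S, a + b ∈ S)
    (hadm : ∀ a ∈ S, 0 ≤ a.2)
    (K : Set (Fin n → ℝ)) (hK : IsCompact K)
    (hKsub : K ⊆ interior (okounkovSet S)) :
    ∃ k₀ : ℕ, 1 ≤ k₀ ∧ ∀ k : ℕ, k₀ ≤ k → K ⊆ convSpow S (Nat.factorial k) := by
  classical
  -- Step 1: neighborhood statement for each point of K
  have key : ∀ x : Fin n → ℝ, ∃ (U : Set (Fin n → ℝ)) (M : ℕ), U ∈ 𝓝 x ∧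
      (x ∈ K → ∀ k, M ≤ k → U ⊆ convexHull ℝ (Spow S (Nat.factorial k))) := by
    intro x
    by_cases hxK : x ∈ K
    swap
    · exact ⟨univ, 0, univ_mem, fun h => absurd h hxK⟩
    have hxint : ((x, (1:ℝ)) : (Fin n → ℝ) × ℝ) ∈ interior (coneOf S) :=
      mem_interior_coneOf (hKsub hxK)
    have hsubcc : interior (coneOf S) ⊆ coneCombos (latticeEmbed '' S) :=
      interior_closure_subset_of_convex (coneCombos_convex _)
    -- get ε ball around (x,1) inside interior (coneOf S)
    obtain ⟨ε, hε, hball⟩ := Metric.isOpen_iff.mp isOpen_interior _ hxint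
    have hC1 : ∀ y : Fin n → ℝ, dist y x < ε →
        ((y, (1:ℝ)) : (Fin n → ℝ) × ℝ) ∈ coneCombos (latticeEmbed '' S) := by
      intro y hy
      apply hsubcc
      apply hball
      rw [Metric.mem_ball, Prod.dist_eq]
      simpa [hε] using hy
    set r : ℝ := ε / 2 with hrdef
    have hr : 0 < r := by positivity
    -- the 2n+1 relevant points are in coneCombos at height 1
    have hptsmem : ∀ i : Fin n, ∀ e : ℝ, (e = r ∨ e = -r) →
        (((x + e • (Pi.single i 1 : Fin n → ℝ) : Fin n → ℝ), (1:ℝ)) : (Fin n → ℝ) × ℝ) ∈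
          coneCombos (latticeEmbed '' S) := by
      intro i e he
      apply hC1
      have : dist (x + e • (Pi.single i 1 : Fin n → ℝ)) x = ‖e • (Pi.single i 1 : Fin n → ℝ)‖ := by
        rw [dist_eq_norm]
        congr 1
        abel
      rw [this, norm_smul, Pi.norm_single, norm_one, mul_one, Real.norm_eq_abs]
      have : |e| = r := by rcases he with h | h <;> simp [h, abs_of_pos hr, hr.le]
      rw [this, hrdef]
      linarith
    have hxmem : ((x, (1:ℝ)) : (Fin n → ℝ) × ℝ) ∈ coneCombos (latticeEmbed '' S) := by
      apply hC1; simpa using hε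
    -- pointwise bounds
    obtain ⟨M0, _, hM0⟩ := pointwise_mem hsemi hadm hxmem
    have hchoice : ∀ i : Fin n, ∀ e : ℝ, (e = r ∨ e = -r) →
        ∃ M : ℕ, 1 ≤ M ∧ ∀ k, M ≤ k →
          x + e • (Pi.single i 1 : Fin n → ℝ) ∈ convexHull ℝ (Spow S (Nat.factorial k)) :=
      fun i e he => pointwise_mem hsemi hadm (hptsmem i e he)
    have hplus : ∀ i : Fin n, ∃ M : ℕ, ∀ k, M ≤ k →
        x + r • (Pi.single i 1 : Fin n → ℝ) ∈ convexHull ℝ (Spow S (Nat.factorial k)) := by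
      intro i
      obtain ⟨M, _, hM⟩ := hchoice i r (Or.inl rfl)
      exact ⟨M, hM⟩
    have hminus : ∀ i : Fin n, ∃ M : ℕ, ∀ k, M ≤ k →
        x + (-r) • (Pi.single i 1 : Fin n → ℝ) ∈ convexHull ℝ (Spow S (Nat.factorial k)) := by
      intro i
      obtain ⟨M, _, hM⟩ := hchoice i (-r) (Or.inr rfl)
      exact ⟨M, hM⟩
    choose Mp hMp using hplus
    choose Mm hMm using hminus
    set M : ℕ := max M0 (Finset.univ.sup (fun i => max (Mp i) (Mm i))) with hM
    refine ⟨Metric.ball x (r / n), M, Metric.ball_mem_nhds x (by positivity), ?_⟩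
    intro _ k hk y hy
    have hnR : (0:ℝ) < n := by exact_mod_cast hn
    -- all points are in D_k
    set D := convexHull ℝ (Spow S (Nat.factorial k)) with hD
    have hxD : x ∈ D := hM0 k (le_trans (le_max_left _ _) hk)
    have hptsD : ∀ i : Fin n, ∀ e : ℝ, (e = r ∨ e = -r) → x + e • (Pi.single i 1 : Fin n → ℝ) ∈ D := by
      intro i e he
      have hsup : max (Mp i) (Mm i) ≤ k := by
        have h1 : max (Mp i) (Mm i) ≤ Finset.univ.sup (fun i => max (Mp i) (Mm i)) :=
          Finset.le_sup (f := fun i => max (Mp i) (Mm i)) (Finset.mem_univ i)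
        omega
      rcases he with h | h
      · rw [h]; exact hMp i k (le_trans (le_max_left _ _) hsup)
      · rw [h]; exact hMm i k (le_trans (le_max_right _ _) hsup)
    refine crossPolytope_subset hn (convex_convexHull ℝ _) hr hxD hptsD ?_
    intro i
    have h1 : |y i - x i| ≤ dist y x := by
      rw [dist_comm]
      have := dist_le_pi_dist x y i
      rw [Real.dist_eq] at this
      rw [abs_sub_comm]
      exact this
    exact le_trans h1 (le_of_lt hy)
  -- Step 2: compactness
  choose U M hU hM using key
  obtain ⟨t, htK, hcover⟩ := hK.elim_nhds_subcover U (fun x _ => hU x)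
  refine ⟨max 1 (t.sup M), le_max_left _ _, fun k hk y hy => ?_⟩
  obtain ⟨x, hxt, hyU⟩ := Set.mem_iUnion₂.mp (hcover hy)
  have hMx : M x ≤ k := le_trans (le_trans (Finset.le_sup hxt) (le_max_right _ _)) hk
  have := hM x (htK x hxt) k hMx hyU
  exact subset_closure this
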